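/- Let G be a finite directed graph with nonnegative arc capacities and distinguished nodes s, t, and let e be an arc. Then the vitality of e, defined as minCut(G) − minCut(G − e), equals max{0, minCut(G) − (minCut_e(G) − c(e))}, where minCut_e(G) is the minimum capacity among all s-t cuts of G crossed by e. -/
import Mathlib


open Finset

/-- Capacity of the s-t cut determined by `S` (arcs from `S` to its complement). -/
def cutCap {V : Type*} [Fintype V] [DecidableEq V] (c : V → V → ℝ) (S : Finset V) : ℝ :=
  ∑ x ∈ S, ∑ y ∈ Sᶜ, c x y

/-- Minimum capacity of an s-t cut. -/
noncomputable def minCut {V : Type*} [Fintype V] [DecidableEq V] (c : V → V → ℝ)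
    (s t : V) : ℝ :=
  sInf {r | ∃ S : Finset V, s ∈ S ∧ t ∉ S ∧ r = cutCap c S}

/-- The graph with arc `e` deleted (its capacity set to `0`). -/
def delArc {V : Type*} [DecidableEq V] (c : V → V → ℝ) (e : V × V) : V → V → ℝ :=
  fun x y => if (x, y) = e then 0 else c x y

/-- Minimum capacity among s-t cuts crossed by the arc `e`. -/
noncomputable def minCutCross {V : Type*} [Fintype V] [DecidableEq V] (c : V → V → ℝ)
    (s t : V) (e : V × V) : ℝ :=
  sInf {r | ∃ S : Finset V, s ∈ S ∧ t ∉ S ∧ e.1 ∈ S ∧ e.2 ∉ S ∧ r = cutCap c S}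

lemma cutCap_del {V : Type*} [Fintype V] [DecidableEq V] (c : V → V → ℝ) (e : V × V)
    (S : Finset V) :
    cutCap (delArc c e) S =
      cutCap c S - (if e.1 ∈ S ∧ e.2 ∉ S then c e.1 e.2 else 0) := by
  unfold cutCap delArc
  rw [← Finset.sum_product', ← Finset.sum_product']
  have : ∀ p : V × V, (if (p.1, p.2) = e then (0:ℝ) else c p.1 p.2) =
      c p.1 p.2 - (if p = e then c e.1 e.2 else 0) := by
    intro p
    by_cases h : p = e
    · subst h; simp
    · rw [if_neg (by simpa using h), if_neg h, sub_zero]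
  simp_rw [this]
  rw [Finset.sum_sub_distrib, Finset.sum_ite_eq' (S ×ˢ Sᶜ) e]
  congr 1
  simp [Finset.mem_product]

theorem flowVit_eq_max {V : Type*} [Fintype V] [DecidableEq V]
    (c : V → V → ℝ) (hc : ∀ x y, 0 ≤ c x y) (s t : V) (hst : s ≠ t) (e : V × V)
    (hcross : ∃ S : Finset V, s ∈ S ∧ t ∉ S ∧ e.1 ∈ S ∧ e.2 ∉ S) :
    minCut c s t - minCut (delArc c e) s t =
      max 0 (minCut c s t - (minCutCross c s t e - c e.1 e.2)) := by
  classical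
  set A : Set ℝ := {r | ∃ S : Finset V, s ∈ S ∧ t ∉ S ∧ r = cutCap c S} with hA
  set B : Set ℝ := {r | ∃ S : Finset V, s ∈ S ∧ t ∉ S ∧ e.1 ∈ S ∧ e.2 ∉ S ∧ r = cutCap c S}
    with hB
  set D : Set ℝ := {r | ∃ S : Finset V, s ∈ S ∧ t ∉ S ∧ r = cutCap (delArc c e) S} with hD
  have hAfin : A.Finite := by
    apply (Set.finite_range (cutCap c)).subset
    rintro r ⟨S, _, _, rfl⟩; exact ⟨S, rfl⟩
  have hBfin : B.Finite := by
    apply (Set.finite_range (cutCap c)).subset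
    rintro r ⟨S, _, _, _, _, rfl⟩; exact ⟨S, rfl⟩
  have hDfin : D.Finite := by
    apply (Set.finite_range (cutCap (delArc c e))).subset
    rintro r ⟨S, _, _, rfl⟩; exact ⟨S, rfl⟩
  have hAne : A.Nonempty := ⟨cutCap c {s}, {s}, by simp, by simp [hst.symm], rfl⟩
  obtain ⟨S0, hs0, ht0, he10, he20⟩ := hcross
  have hBne : B.Nonempty := ⟨cutCap c S0, S0, hs0, ht0, he10, he20, rfl⟩
  have hDne : D.Nonempty := ⟨cutCap (delArc c e) S0, S0, hs0, ht0, rfl⟩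
  have hAmem : minCut c s t ∈ A := hAne.csInf_mem hAfin
  have hBmem : minCutCross c s t e ∈ B := hBne.csInf_mem hBfin
  have hDmem : minCut (delArc c e) s t ∈ D := hDne.csInf_mem hDfin
  have hAle : ∀ r ∈ A, minCut c s t ≤ r := fun r hr => csInf_le hAfin.bddBelow hr
  have hBle : ∀ r ∈ B, minCutCross c s t e ≤ r := fun r hr => csInf_le hBfin.bddBelow hr
  have hDle : ∀ r ∈ D, minCut (delArc c e) s t ≤ r := fun r hr => csInf_le hDfin.bddBelow hr
  have key : minCut (delArc c e) s t =
      min (minCut c s t) (minCutCross c s t e - c e.1 e.2) := by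
    apply le_antisymm
    · apply le_min
      · obtain ⟨S, hs, ht, hr⟩ := hAmem
        refine le_trans (hDle _ ⟨S, hs, ht, rfl⟩) ?_
        rw [cutCap_del, hr]
        have : (0:ℝ) ≤ if e.1 ∈ S ∧ e.2 ∉ S then c e.1 e.2 else 0 := by
          split <;> simp [hc]
        linarith
      · obtain ⟨S, hs, ht, he1, he2, hr⟩ := hBmem
        refine le_trans (hDle _ ⟨S, hs, ht, rfl⟩) ?_
        rw [cutCap_del, hr, if_pos ⟨he1, he2⟩]
    · obtain ⟨S, hs, ht, hr⟩ := hDmem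
      rw [hr, cutCap_del]
      by_cases h : e.1 ∈ S ∧ e.2 ∉ S
      · rw [if_pos h]
        refine le_trans (min_le_right _ _) ?_
        have := hBle _ ⟨S, hs, ht, h.1, h.2, rfl⟩
        linarith
      · rw [if_neg h, sub_zero]
        exact le_trans (min_le_left _ _) (hAle _ ⟨S, hs, ht, rfl⟩)
  rw [key]
  rcases min_cases (minCut c s t) (minCutCross c s t e - c e.1 e.2) with ⟨h1, h2⟩ | ⟨h1, h2⟩ <;>
    rw [h1] <;> [rw [max_eq_left (by linarith)]; rw [max_eq_right (by linarith)]] <;> ring
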